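/- Let $n \ge 3$, $M > 0$, $\sigma = \frac{2M+1}{n}$, and $\alpha \in (0,1)$. For $\epsilon \in (0,1)$ define $\varphi_\epsilon(x) = 1 + \sigma|x|^2 - (\epsilon/|x|)^\alpha$ for $x \ne 0$. Let $\vec{b} \in C^1(B_1;\mathbb{R}^n)$ with $\|\vec{b}\|_{C^1(B_1)} \le M$. Then there exists $r_0 \in (0,1)$, depending only on $n$, $\alpha$ and $M$ (not on $\epsilon$), such that for all $x$ with $0 < |x| \le r_0$: $-\Delta\varphi_\epsilon(x) - \vec{b}(x)\cdot\nabla\varphi_\epsilon(x) + (2M+1)\varphi_\epsilon(x) < 0$. -/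

import Mathlib

open MeasureTheory Metric Real
open scoped RealInnerProductSpace

lemma phi_deriv (n : ℕ) (σ α A : ℝ)
    (z : EuclideanSpace ℝ (Fin n)) (hz : z ≠ 0) :
    HasFDerivAt (fun w : EuclideanSpace ℝ (Fin n) => 1 + σ * ‖w‖^2 - A * (‖w‖^2) ^ (-α/2 : ℝ))
      ((σ + A*(α/2)*(‖z‖^2 : ℝ) ^ (-α/2-1 : ℝ)) • (2 • innerSL ℝ z)) z := by
  have hz0 : 0 < ‖z‖ := norm_pos_iff.mpr hz
  have ht : (‖z‖^2 : ℝ) ≠ 0 := by positivity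
  have hu : HasFDerivAt (fun w : EuclideanSpace ℝ (Fin n) => ‖w‖^2) (2 • innerSL ℝ z) z :=
    (hasStrictFDerivAt_norm_sq z).hasFDerivAt
  have hF : HasDerivAt (fun s : ℝ => 1 + σ * s - A * s ^ (-α/2 : ℝ))
      (σ - A * ((-α/2) * (‖z‖^2 : ℝ) ^ (-α/2-1 : ℝ))) (‖z‖^2) := by
    have h1 : HasDerivAt (fun s : ℝ => 1 + σ * s) σ (‖z‖^2) := by
      simpa using ((hasDerivAt_id (‖z‖^2 : ℝ)).const_mul σ).const_add 1
    have h2 : HasDerivAt (fun s : ℝ => A * s ^ (-α/2 : ℝ))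
        (A * ((-α/2) * (‖z‖^2 : ℝ) ^ (-α/2-1 : ℝ))) (‖z‖^2) :=
      (Real.hasDerivAt_rpow_const (Or.inl ht)).const_mul A
    exact h1.sub h2
  have := hF.comp_hasFDerivAt z hu
  refine this.congr_fderiv ?_
  congr 1
  ring

lemma coeff_deriv (n : ℕ) (σ α A : ℝ)
    (x : EuclideanSpace ℝ (Fin n)) (hx : x ≠ 0) :
    HasFDerivAt (fun w : EuclideanSpace ℝ (Fin n) => σ + A*(α/2)*(‖w‖^2 : ℝ) ^ (-α/2-1 : ℝ))
      ((A*(α/2)*((-α/2-1) * (‖x‖^2 : ℝ) ^ (-α/2-2 : ℝ))) • (2 • innerSL ℝ x)) x := by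
  have hx0 : 0 < ‖x‖ := norm_pos_iff.mpr hx
  have ht : (‖x‖^2 : ℝ) ≠ 0 := by positivity
  have hu : HasFDerivAt (fun w : EuclideanSpace ℝ (Fin n) => ‖w‖^2) (2 • innerSL ℝ x) x :=
    (hasStrictFDerivAt_norm_sq x).hasFDerivAt
  have hF : HasDerivAt (fun s : ℝ => σ + A*(α/2)*s ^ (-α/2-1 : ℝ))
      (A*(α/2)*((-α/2-1) * (‖x‖^2 : ℝ) ^ (-α/2-2 : ℝ))) (‖x‖^2) := by
    have h2 : HasDerivAt (fun s : ℝ => A*(α/2) * s ^ (-α/2-1 : ℝ))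
        (A*(α/2) * ((-α/2-1) * (‖x‖^2 : ℝ) ^ ((-α/2-1) - 1 : ℝ))) (‖x‖^2) :=
      (Real.hasDerivAt_rpow_const (Or.inl ht)).const_mul (A*(α/2))
    have he : ((-α/2-1) - 1 : ℝ) = (-α/2-2 : ℝ) := by ring
    rw [he] at h2
    exact h2.const_add σ
  exact hF.comp_hasFDerivAt (f := fun w : EuclideanSpace ℝ (Fin n) => ‖w‖^2) x hu

set_option maxHeartbeats 1000000 in
theorem barrier_function_subsolution_dim_ge_three
    (n : ℕ) (hn : 3 ≤ n) (M : ℝ) (hM : 0 < M)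
    (α : ℝ) (hα : α ∈ Set.Ioo (0:ℝ) 1)
    (σ : ℝ) (hσ : σ = (2*M + 1) / n)
    (b : EuclideanSpace ℝ (Fin n) → EuclideanSpace ℝ (Fin n))
    (hb : ContDiffOn ℝ 1 b (ball (0 : EuclideanSpace ℝ (Fin n)) 1))
    (hbM : ∀ x ∈ ball (0 : EuclideanSpace ℝ (Fin n)) 1,
      ‖b x‖ ≤ M ∧ ‖fderiv ℝ b x‖ ≤ M) :
    ∃ r0 ∈ Set.Ioo (0:ℝ) 1, ∀ ε ∈ Set.Ioo (0:ℝ) 1,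
      ∀ φ : EuclideanSpace ℝ (Fin n) → ℝ,
        (∀ z, φ z = 1 + σ * ‖z‖ ^ 2 - (ε / ‖z‖) ^ α) →
        ∀ x : EuclideanSpace ℝ (Fin n), 0 < ‖x‖ → ‖x‖ ≤ r0 →
          -(∑ i, fderiv ℝ (fun z => fderiv ℝ φ z (EuclideanSpace.single i 1)) x
              (EuclideanSpace.single i 1))
            - ⟪b x, gradient φ x⟫ + (2*M + 1) * φ x < 0 := by
  obtain ⟨hα0, hα1⟩ := hα
  have hn0 : (0:ℝ) < n := by positivity
  have hn3 : (3:ℝ) ≤ n := by exact_mod_cast hn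
  have hσ0 : 0 < σ := by rw [hσ]; positivity
  set r0 : ℝ := min ((1-α)/(M+1)) (1/(4*M+1)) with hr0def
  have hr0pos : 0 < r0 :=
    lt_min (div_pos (by linarith) (by linarith)) (by positivity)
  have hr0lt1 : r0 < 1 := by
    have h1 : (1/(4*M+1) : ℝ) < 1 := by
      rw [div_lt_one (by linarith)]; linarith
    exact lt_of_le_of_lt (min_le_right _ _) h1
  refine ⟨r0, ⟨hr0pos, hr0lt1⟩, ?_⟩
  intro ε hε φ hφ x hx hxr
  set A : ℝ := ε ^ α with hAdef
  have hA : 0 < A := Real.rpow_pos_of_pos hε.1 α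
  have hφ' : φ = fun w : EuclideanSpace ℝ (Fin n) =>
      1 + σ * ‖w‖^2 - A * (‖w‖^2 : ℝ) ^ (-α/2 : ℝ) := by
    funext w
    rw [hφ w]
    rcases eq_or_ne w 0 with rfl | hw
    · simp [Real.zero_rpow hα0.ne', Real.zero_rpow (by linarith : (-α/2 : ℝ) ≠ 0)]
    · have hw0 : 0 < ‖w‖ := norm_pos_iff.mpr hw
      have h1 : ((‖w‖^2 : ℝ)) ^ (-α/2 : ℝ) = ‖w‖ ^ (-α : ℝ) := by
        rw [← Real.rpow_natCast ‖w‖ 2, ← Real.rpow_mul (norm_nonneg w)]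
        congr 1
        push_cast; ring
      rw [h1, Real.div_rpow hε.1.le (norm_nonneg w), Real.rpow_neg (norm_nonneg w)]
      ring
  have hx0 : x ≠ 0 := by simpa [norm_pos_iff] using hx
  set t : ℝ := ‖x‖^2 with htdef
  have ht0 : 0 < t := by positivity
  set c : ℝ := σ + A*(α/2)*t ^ (-α/2-1 : ℝ) with hcdef
  set d0 : ℝ := A*(α/2)*((-α/2-1) * t ^ (-α/2-2 : ℝ)) with hd0def
  -- gradient
  have hgrad : gradient φ x = (2*c) • x := by
    have hF := phi_deriv n σ α A x hx0
    rw [← hφ'] at hF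
    have hg : HasGradientAt φ ((2*c) • x) x := by
      rw [hasGradientAt_iff_hasFDerivAt]
      refine hF.congr_fderiv ?_
      ext v
      simp only [InnerProductSpace.toDual_apply_apply, real_inner_smul_left,
        ContinuousLinearMap.smul_apply, smul_eq_mul, nsmul_eq_mul, Nat.cast_ofNat,
        innerSL_apply_apply]
      rw [hcdef]; ring
    exact hg.gradient
  -- second derivatives
  have hsec : ∀ i : Fin n, fderiv ℝ (fun z => fderiv ℝ φ z (EuclideanSpace.single i 1)) x
      (EuclideanSpace.single i 1) = 2*c + 4*d0*(x i)^2 := by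
    intro i
    set e : EuclideanSpace ℝ (Fin n) := EuclideanSpace.single i (1:ℝ) with hedef
    have hee : ⟪e, e⟫ = (1:ℝ) := by
      simp [hedef, EuclideanSpace.inner_single_left, EuclideanSpace.single_apply]
    have hex : ⟪e, x⟫ = x i := by
      simp [hedef, EuclideanSpace.inner_single_left]
    have hxe : ⟪x, e⟫ = x i := by rw [real_inner_comm]; exact hex
    have hev : (fun z => fderiv ℝ φ z e) =ᶠ[nhds x]
        (fun z => (σ + A*(α/2)*(‖z‖^2 : ℝ) ^ (-α/2-1 : ℝ)) * (2 * (innerSL ℝ e z))) := by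
      filter_upwards [(isOpen_compl_singleton).mem_nhds
        (by simpa using hx0 : x ∈ ({(0:EuclideanSpace ℝ (Fin n))}ᶜ : Set _))] with z hz
      have hz0 : (z : EuclideanSpace ℝ (Fin n)) ≠ 0 := hz
      have hF := phi_deriv n σ α A z hz0
      rw [← hφ'] at hF
      rw [hF.fderiv]
      simp only [ContinuousLinearMap.smul_apply, smul_eq_mul, nsmul_eq_mul, Nat.cast_ofNat,
        innerSL_apply_apply]
      rw [real_inner_comm z e]
    have h2 : HasFDerivAt (fun z : EuclideanSpace ℝ (Fin n) => 2 * (innerSL ℝ e z))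
        ((2:ℝ) • (innerSL ℝ e)) x := ((innerSL ℝ e).hasFDerivAt).const_mul 2
    have hG : HasFDerivAt (fun z : EuclideanSpace ℝ (Fin n) =>
        (σ + A*(α/2)*(‖z‖^2 : ℝ) ^ (-α/2-1 : ℝ)) * (2 * (innerSL ℝ e z))) _ x :=
      (coeff_deriv n σ α A x hx0).mul h2
    rw [hev.fderiv_eq, hG.fderiv]
    simp only [ContinuousLinearMap.add_apply, ContinuousLinearMap.smul_apply, smul_eq_mul,
      nsmul_eq_mul, Nat.cast_ofNat, innerSL_apply_apply, hee, hex, hxe]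
    rw [hcdef, hd0def, htdef]
    ring
  have hsum : ∑ i, fderiv ℝ (fun z => fderiv ℝ φ z (EuclideanSpace.single i 1)) x
      (EuclideanSpace.single i 1) = 2*n*c + 4*d0*t := by
    rw [Finset.sum_congr rfl (fun i _ => hsec i)]
    have hxx : ∑ i, (x i)^2 = t := by
      have h := real_inner_self_eq_norm_sq x
      rw [PiLp.inner_apply] at h
      simp only [RCLike.inner_apply, conj_trivial] at h
      calc ∑ i, (x i)^2 = ∑ i, x i * x i := by
            exact Finset.sum_congr rfl (fun i _ => by ring)
      _ = t := by rw [h, htdef]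
    rw [Finset.sum_add_distrib, Finset.sum_const, Finset.card_univ, Fintype.card_fin,
      ← Finset.mul_sum, hxx, nsmul_eq_mul]
    ring
  -- inner product bound
  have hxball : x ∈ ball (0 : EuclideanSpace ℝ (Fin n)) 1 := by
    rw [mem_ball_zero_iff]; exact lt_of_le_of_lt hxr hr0lt1
  have hbx : ‖b x‖ ≤ M := (hbM x hxball).1
  have hip : |⟪b x, x⟫| ≤ M * ‖x‖ :=
    le_trans (abs_real_inner_le_norm _ _) (mul_le_mul_of_nonneg_right hbx (norm_nonneg x))
  have hipg : ⟪b x, gradient φ x⟫ = 2*c*⟪b x, x⟫ := by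
    rw [hgrad, real_inner_smul_right]
  rw [hsum, hipg, hφ x]
  set r : ℝ := ‖x‖ with hrdef
  set q : ℝ := t ^ (-α/2-1 : ℝ) with hqdef
  have hq0 : 0 < q := Real.rpow_pos_of_pos ht0 _
  have e1 : t ^ (-α/2-2 : ℝ) = q / t := by
    rw [hqdef, show (-α/2-2 : ℝ) = (-α/2-1) - 1 by ring, Real.rpow_sub ht0, Real.rpow_one]
  have hr0' : 0 < r := hx
  have e2 : (ε / r) ^ α = A * (q * t) := by
    have h1 : (t : ℝ) ^ (-α/2 : ℝ) = q * t := by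
      rw [hqdef, show (-α/2 : ℝ) = (-α/2-1) + 1 by ring, Real.rpow_add ht0, Real.rpow_one]
      ring_nf
    have h2 : (t : ℝ) ^ (-α/2 : ℝ) = r ^ (-α : ℝ) := by
      rw [htdef, ← Real.rpow_natCast r 2, ← Real.rpow_mul hr0'.le]
      congr 1
      push_cast; ring
    rw [Real.div_rpow hε.1.le hr0'.le, div_eq_mul_inv, ← Real.rpow_neg hr0'.le, ← h2, h1,
      ← hAdef]
  rw [e2, hd0def, e1]
  have hdq : 4 * (A * (α/2) * ((-α/2-1) * (q/t))) * t = -(α*(α+2)) * (A*q) := by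
    field_simp
    ring
  rw [hdq]
  clear_value A t c d0 r q
  clear hb hbM hφ hφ' hgrad hsec hsum hdq e1 e2 hd0def hqdef
  -- arithmetic facts
  have hrle : r ≤ r0 := hxr
  have hr1 : r < 1 := lt_of_le_of_lt hrle hr0lt1
  have hMr : M * r ≤ 1 - α := by
    have h := le_trans hrle (min_le_left _ _)
    have h2 := (le_div_iff₀ (by linarith : (0:ℝ) < M+1)).mp h
    nlinarith [hr0'.le]
  have hr4 : r * (4*M+1) ≤ 1 := by
    have h := le_trans hrle (min_le_right _ _)
    have h2 := (le_div_iff₀ (by linarith : (0:ℝ) < 4*M+1)).mp h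
    linarith
  have hσn : σ * n = 2*M+1 := by rw [hσ, div_mul_cancel₀ _ hn0.ne']
  have hσ3 : σ ≤ (2*M+1)/3 :=
    hσ ▸ div_le_div_of_nonneg_left (by linarith) (by norm_num) hn3
  have hc0 : 0 < c := by
    rw [hcdef]
    have : 0 < A * (α/2) * q := by positivity
    linarith
  have key : -(2*↑n*c + -(α*(α+2)) * (A*q)) - 2*c*⟪b x, x⟫ + (2*M+1)*(1 + σ*r^2 - A*(q*t))
      = -(2*M+1) + (2*M+1)*σ*r^2 + α*(α+2-↑n)*(A*q) - (2*M+1)*((A*q)*r^2) - 2*c*⟪b x, x⟫ := by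
    rw [htdef]
    linear_combination (-2*(n:ℝ)) * hcdef + (-2:ℝ) * hσn
  rw [key]
  have hipb : -(2*c*⟪b x, x⟫) ≤ 2*σ*(M*r) + α*(A*q)*(M*r) := by
    have h0 : (0:ℝ) ≤ 2*c*(M*r + ⟪b x, x⟫) :=
      mul_nonneg (by linarith) (by linarith [neg_le_of_abs_le hip])
    have hc' : 2*c*(M*r) = 2*σ*(M*r) + α*(A*q)*(M*r) := by rw [hcdef]; ring
    nlinarith [h0]
  have hn2 : α*(α+2-(n:ℝ)) + α*(M*r) ≤ 0 := by
    have h1 : α*(M*r) ≤ α*(1-α) := mul_le_mul_of_nonneg_left hMr hα0.le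
    have h2 : α*(α+2-(n:ℝ)) ≤ α*(α-1) :=
      mul_le_mul_of_nonneg_left (by linarith) hα0.le
    nlinarith
  have hAq : (0:ℝ) < A*q := mul_pos hA hq0
  have halpha : α*(α+2-(n:ℝ))*(A*q) + α*(A*q)*(M*r) ≤ 0 := by
    have := mul_nonpos_of_nonpos_of_nonneg hn2 hAq.le
    nlinarith [this]
  have hrr : r^2 ≤ r := by nlinarith
  have h5 : σ*(r*(4*M+1)) ≤ σ*1 := mul_le_mul_of_nonneg_left hr4 hσ0.le
  have hfin : (2*M+1)*σ*r^2 + 2*σ*(M*r) < 2*M+1 := by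
    nlinarith [h5, hσ3, mul_le_mul_of_nonneg_left hrr hσ0.le]
  have hdrop : (0:ℝ) ≤ (2*M+1)*((A*q)*r^2) :=
    mul_nonneg (by linarith) (mul_nonneg hAq.le (sq_nonneg r))
  nlinarith [hipb, halpha, hdrop, hfin]
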